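/- For every integer N ≥ 2, every s ∈ [0,1], and pairwise distinct points x_1,…,x_N ∈ ℝ^d, one has ∑_{i=1}^N ⟨ ∑_{j≠i} (x_i−x_j)/|x_i−x_j|^{s+1} , ∑_{ℓ≠i} (x_i−x_ℓ)/|x_i−x_ℓ|^{s+1} ⟩ ≥ 2 ∑_{1≤i<j≤N} 1/|x_i−x_j|^{2s}. -/

import Mathlib

open scoped RealInnerProductSpace
open Finset


-- helper assuming r ≤ q ≤ p
lemma helperG (t p q r : ℝ) (ht1 : 1 ≤ t) (ht2 : t ≤ 2)
    (hr : 0 < r) (hrq : r ≤ q) (hqp : q ≤ p) (htri : p ≤ q + r) :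
    0 ≤ p ^ t * (q ^ 2 + r ^ 2 - p ^ 2) + q ^ t * (r ^ 2 + p ^ 2 - q ^ 2)
      + r ^ t * (p ^ 2 + q ^ 2 - r ^ 2) := by
  have hq : 0 < q := lt_of_lt_of_le hr hrq
  have hp : 0 < p := lt_of_lt_of_le hq hqp
  have hpt : (0:ℝ) < p ^ t := Real.rpow_pos_of_pos hp t
  have hqt : (0:ℝ) < q ^ t := Real.rpow_pos_of_pos hq t
  have hrt : (0:ℝ) < r ^ t := Real.rpow_pos_of_pos hr t
  -- p^2 = p^t * p^(2-t) etc
  have hsplit : ∀ y : ℝ, 0 < y → y ^ 2 = y ^ t * y ^ (2 - t) := by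
    intro y hy
    rw [← Real.rpow_add hy]
    norm_num [Real.rpow_two]
  have hmono1 : q ^ (2 - t) ≤ p ^ (2 - t) :=
    Real.rpow_le_rpow hq.le hqp (by linarith)
  have hmono2 : r ^ (2 - t) ≤ p ^ (2 - t) :=
    Real.rpow_le_rpow hr.le (le_trans hrq hqp) (by linarith)
  have hA2 : p ^ t * q ^ 2 ≤ p ^ 2 * q ^ t := by
    rw [hsplit q hq, hsplit p hp]
    calc p ^ t * (q ^ t * q ^ (2 - t)) = (p ^ t * q ^ t) * q ^ (2-t) := by ring
    _ ≤ (p ^ t * q ^ t) * p ^ (2-t) := by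
        apply mul_le_mul_of_nonneg_left hmono1 (by positivity)
    _ = p ^ t * p ^ (2 - t) * q ^ t := by ring
  have hA3 : p ^ t * r ^ 2 ≤ p ^ 2 * r ^ t := by
    rw [hsplit r hr, hsplit p hp]
    calc p ^ t * (r ^ t * r ^ (2 - t)) = (p ^ t * r ^ t) * r ^ (2-t) := by ring
    _ ≤ (p ^ t * r ^ t) * p ^ (2-t) := by
        apply mul_le_mul_of_nonneg_left hmono2 (by positivity)
    _ = p ^ t * p ^ (2 - t) * r ^ t := by ring
  have hb2 : (0:ℝ) ≤ r ^ 2 + p ^ 2 - q ^ 2 := by nlinarith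
  have hb3 : (0:ℝ) ≤ p ^ 2 + q ^ 2 - r ^ 2 := by nlinarith
  have hH : (0:ℝ) ≤ p ^ 2 * (q ^ 2 + r ^ 2 - p ^ 2) + q ^ 2 * (r ^ 2 + p ^ 2 - q ^ 2)
      + r ^ 2 * (p ^ 2 + q ^ 2 - r ^ 2) := by
    have h1 : (0:ℝ) ≤ q + r - p := by linarith
    have h2 : (0:ℝ) ≤ p - q + r := by linarith
    have h3 : (0:ℝ) ≤ p + q - r := by linarith
    have h4 : (0:ℝ) ≤ p + q + r := by linarith
    nlinarith [mul_nonneg (mul_nonneg (mul_nonneg h1 h2) h3) h4]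
  have key : 0 ≤ p ^ 2 * (p ^ t * (q ^ 2 + r ^ 2 - p ^ 2) + q ^ t * (r ^ 2 + p ^ 2 - q ^ 2)
      + r ^ t * (p ^ 2 + q ^ 2 - r ^ 2)) := by
    nlinarith [mul_nonneg (sub_nonneg.2 hA2) hb2, mul_nonneg (sub_nonneg.2 hA3) hb3,
      mul_nonneg hpt.le hH]
  have hp2 : (0:ℝ) < p ^ 2 := by positivity
  nlinarith [key, hp2]

lemma coreG (t p q r : ℝ) (ht1 : 1 ≤ t) (ht2 : t ≤ 2)
    (hp : 0 < p) (hq : 0 < q) (hr : 0 < r)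
    (h1 : p ≤ q + r) (h2 : q ≤ p + r) (h3 : r ≤ p + q) :
    0 ≤ p ^ t * (q ^ 2 + r ^ 2 - p ^ 2) + q ^ t * (r ^ 2 + p ^ 2 - q ^ 2)
      + r ^ t * (p ^ 2 + q ^ 2 - r ^ 2) := by
  rcases le_total p q with hpq | hpq <;> rcases le_total q r with hqr | hqr <;>
    rcases le_total p r with hpr | hpr
  · linarith [helperG t r q p ht1 ht2 hp hpq hqr (by linarith)]
  · linarith [helperG t r q p ht1 ht2 hp hpq hqr (by linarith)]
  · linarith [helperG t q r p ht1 ht2 hp hpr hqr (by linarith)]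
  · linarith [helperG t q p r ht1 ht2 hr hpr hpq (by linarith)]
  · linarith [helperG t r p q ht1 ht2 hq hpq hpr (by linarith)]
  · linarith [helperG t p r q ht1 ht2 hq hqr hpr (by linarith)]
  · linarith [helperG t p q r ht1 ht2 hr hqr hpq (by linarith)]
  · linarith [helperG t p q r ht1 ht2 hr hqr hpq (by linarith)]

lemma triPts {d : ℕ} (t : ℝ) (ht1 : 1 ≤ t) (ht2 : t ≤ 2)
    (a b c : EuclideanSpace ℝ (Fin d)) (hab : a ≠ b) (hac : a ≠ c) (hbc : b ≠ c) :
    0 ≤ (‖a - b‖ ^ t)⁻¹ * (‖a - c‖ ^ t)⁻¹ * ⟪a - b, a - c⟫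
      + (‖b - c‖ ^ t)⁻¹ * (‖b - a‖ ^ t)⁻¹ * ⟪b - c, b - a⟫
      + (‖c - a‖ ^ t)⁻¹ * (‖c - b‖ ^ t)⁻¹ * ⟪c - a, c - b⟫ := by
  have hp : (0:ℝ) < ‖b - c‖ := by rw [norm_pos_iff, sub_ne_zero]; exact hbc
  have hq : (0:ℝ) < ‖a - c‖ := by rw [norm_pos_iff, sub_ne_zero]; exact hac
  have hr : (0:ℝ) < ‖a - b‖ := by rw [norm_pos_iff, sub_ne_zero]; exact hab
  set p := ‖b - c‖ with hpd
  set q := ‖a - c‖ with hqd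
  set r := ‖a - b‖ with hrd
  have hba : ‖b - a‖ = r := norm_sub_rev b a
  have hca : ‖c - a‖ = q := norm_sub_rev c a
  have hcb : ‖c - b‖ = p := norm_sub_rev c b
  -- inner products via polarization
  have e1 : ⟪a - b, a - c⟫ = (r ^ 2 + q ^ 2 - p ^ 2) / 2 := by
    have h := norm_sub_sq_real (a - b) (a - c)
    have hid : (a - b) - (a - c) = c - b := by abel
    rw [hid, hcb] at h
    linarith
  have e2 : ⟪b - c, b - a⟫ = (p ^ 2 + r ^ 2 - q ^ 2) / 2 := by
    have h := norm_sub_sq_real (b - c) (b - a)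
    have hid : (b - c) - (b - a) = a - c := by abel
    rw [hid, hba] at h
    linarith
  have e3 : ⟪c - a, c - b⟫ = (q ^ 2 + p ^ 2 - r ^ 2) / 2 := by
    have h := norm_sub_sq_real (c - a) (c - b)
    have hid : (c - a) - (c - b) = b - a := by abel
    rw [hid, hca, hcb, hba] at h
    linarith
  -- triangle inequalities
  have t1 : p ≤ q + r := by
    have := norm_sub_le_norm_sub_add_norm_sub b a c
    rw [hba] at this; linarith
  have t2 : q ≤ p + r := by
    have := norm_sub_le_norm_sub_add_norm_sub a b c
    linarith
  have t3 : r ≤ p + q := by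
    have := norm_sub_le_norm_sub_add_norm_sub a c b
    rw [hcb] at this; linarith
  have hG := coreG t p q r ht1 ht2 hp hq hr t1 t2 t3
  have hpt : (0:ℝ) < p ^ t := Real.rpow_pos_of_pos hp t
  have hqt : (0:ℝ) < q ^ t := Real.rpow_pos_of_pos hq t
  have hrt : (0:ℝ) < r ^ t := Real.rpow_pos_of_pos hr t
  rw [e1, e2, e3, hba, hca, hcb]
  have key : (r ^ t)⁻¹ * (q ^ t)⁻¹ * ((r ^ 2 + q ^ 2 - p ^ 2) / 2)
      + (p ^ t)⁻¹ * (r ^ t)⁻¹ * ((p ^ 2 + r ^ 2 - q ^ 2) / 2)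
      + (q ^ t)⁻¹ * (p ^ t)⁻¹ * ((q ^ 2 + p ^ 2 - r ^ 2) / 2)
      = (p ^ t * (q ^ 2 + r ^ 2 - p ^ 2) + q ^ t * (r ^ 2 + p ^ 2 - q ^ 2)
        + r ^ t * (p ^ 2 + q ^ 2 - r ^ 2)) / (2 * (p ^ t * q ^ t * r ^ t)) := by
    field_simp
    ring
  rw [key]
  exact div_nonneg hG (by positivity)

lemma cyc3 {N : ℕ} (h : Fin N → Fin N → Fin N → ℝ) :
    (∑ i : Fin N, ∑ j : Fin N, ∑ l : Fin N, h i j l)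
      = ∑ i : Fin N, ∑ j : Fin N, ∑ l : Fin N, h j l i := by
  conv_rhs => rw [Finset.sum_comm]
  exact Finset.sum_congr rfl fun a _ => Finset.sum_comm

lemma diag_calc (r : ℝ) (hr : 0 < r) (s : ℝ) :
    (r ^ (s + 1))⁻¹ * (r ^ (s + 1))⁻¹ * r ^ 2 = (r ^ (2 * s))⁻¹ := by
  have key : r ^ (s + 1) * r ^ (s + 1) = r ^ (2 * s) * r ^ 2 := by
    rw [← Real.rpow_natCast r 2, ← Real.rpow_add hr, ← Real.rpow_add hr]
    norm_num
    ring_nf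
  have h1 : r ^ (s + 1) ≠ 0 := (Real.rpow_pos_of_pos hr _).ne'
  have h2 : r ^ (2 * s) ≠ 0 := (Real.rpow_pos_of_pos hr _).ne'
  field_simp
  rw [sq (r ^ (s + 1)), key, mul_comm 2 s]; ring

theorem stmt_3 (N d : ℕ) (hN : 2 ≤ N) (s : ℝ) (hs0 : 0 ≤ s) (hs1 : s ≤ 1)
    (x : Fin N → EuclideanSpace ℝ (Fin d))
    (hx : ∀ i j : Fin N, i ≠ j → x i ≠ x j) :
    ∑ i : Fin N,
      ⟪∑ j ∈ Finset.univ.filter (fun j => j ≠ i), (‖x i - x j‖ ^ (s + 1))⁻¹ • (x i - x j),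
        ∑ l ∈ Finset.univ.filter (fun l => l ≠ i), (‖x i - x l‖ ^ (s + 1))⁻¹ • (x i - x l)⟫
      ≥ 2 * ∑ i : Fin N, ∑ j ∈ Finset.univ.filter (fun j => i < j),
          (‖x i - x j‖ ^ (2 * s))⁻¹ := by
  have hnz : ∀ i j : Fin N, i ≠ j → (0:ℝ) < ‖x i - x j‖ := fun i j h => by
    rw [norm_pos_iff, sub_ne_zero]; exact hx i j h
  set f : Fin N → Fin N → Fin N → ℝ := fun i j l =>
    (‖x i - x j‖ ^ (s + 1))⁻¹ * (‖x i - x l‖ ^ (s + 1))⁻¹ * ⟪x i - x j, x i - x l⟫ with hf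
  set w : Fin N → Fin N → ℝ := fun i j => (‖x i - x j‖ ^ (2 * s))⁻¹ with hw
  -- Step 1: expand the inner product of sums
  have hLHS : ∀ i : Fin N,
      ⟪∑ j ∈ Finset.univ.filter (fun j => j ≠ i), (‖x i - x j‖ ^ (s + 1))⁻¹ • (x i - x j),
        ∑ l ∈ Finset.univ.filter (fun l => l ≠ i), (‖x i - x l‖ ^ (s + 1))⁻¹ • (x i - x l)⟫
      = ∑ j ∈ Finset.univ.filter (fun j => j ≠ i),
          ∑ l ∈ Finset.univ.filter (fun l => l ≠ i), f i j l := by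
    intro i
    rw [sum_inner]
    refine Finset.sum_congr rfl fun j hj => ?_
    rw [inner_sum]
    refine Finset.sum_congr rfl fun l hl => ?_
    rw [real_inner_smul_left, real_inner_smul_right, hf]
    ring
  -- Step 2: split off the diagonal l = j
  have hdiag : ∀ i j : Fin N, j ≠ i → f i j j = w i j := by
    intro i j hj
    have := diag_calc ‖x i - x j‖ (hnz i j (Ne.symm hj)) s
    simp only [hf, hw, real_inner_self_eq_norm_sq]
    linarith [this]
  have hsplit : ∀ i : Fin N,
      ∑ j ∈ Finset.univ.filter (fun j => j ≠ i),
          ∑ l ∈ Finset.univ.filter (fun l => l ≠ i), f i j l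
      = (∑ j ∈ Finset.univ.filter (fun j => j ≠ i), w i j)
        + ∑ j ∈ Finset.univ.filter (fun j => j ≠ i),
            ∑ l ∈ (Finset.univ.filter (fun l => l ≠ i)).erase j, f i j l := by
    intro i
    rw [← Finset.sum_add_distrib]
    refine Finset.sum_congr rfl fun j hj => ?_
    have hji : j ≠ i := (Finset.mem_filter.1 hj).2
    rw [← hdiag i j hji, ← Finset.add_sum_erase _ _ hj]
  -- Step 3: the symmetric part is v RHS
  have hwsymm : ∀ i j : Fin N, w j i = w i j := fun i j => by
    simp [hw, norm_sub_rev]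
  have hDsplit : ∀ i : Fin N,
      ∑ j ∈ Finset.univ.filter (fun j => j ≠ i), w i j
      = (∑ j ∈ Finset.univ.filter (fun j => i < j), w i j)
        + ∑ j ∈ Finset.univ.filter (fun j => j < i), w i j := by
    intro i
    have hset : (Finset.univ.filter (fun j : Fin N => j ≠ i))
        = Finset.univ.filter (fun j => i < j) ∪ Finset.univ.filter (fun j => j < i) := by
      ext j
      simp only [Finset.mem_filter, Finset.mem_union, Finset.mem_univ, true_and]
      constructor
      · intro h
        exact (lt_or_gt_of_ne h).symm
      · rintro (h | h)
        · exact ne_of_gt h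
        · exact ne_of_lt h
    rw [hset, Finset.sum_union]
    rw [Finset.disjoint_left]
    intro a ha hb
    simp only [Finset.mem_filter, Finset.mem_univ, true_and] at ha hb
    exact lt_asymm ha hb
  have hswap : (∑ i : Fin N, ∑ j ∈ Finset.univ.filter (fun j => j < i), w i j)
      = ∑ i : Fin N, ∑ j ∈ Finset.univ.filter (fun j => i < j), w i j := by
    rw [Finset.sum_comm' (t' := Finset.univ)
      (s' := fun j => Finset.univ.filter (fun i : Fin N => j < i)) (by intro a b; simp)]
    exact Finset.sum_congr rfl fun i _ => Finset.sum_congr rfl fun j _ => hwsymm i j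
  -- Step 4: nonnegativity of the off-diagonal part
  set g : Fin N → Fin N → Fin N → ℝ := fun i j l =>
    if i ≠ j ∧ j ≠ l ∧ l ≠ i then f i j l else 0 with hg
  have hCg : (∑ i : Fin N, ∑ j ∈ Finset.univ.filter (fun j => j ≠ i),
        ∑ l ∈ (Finset.univ.filter (fun l => l ≠ i)).erase j, f i j l)
      = ∑ i : Fin N, ∑ j : Fin N, ∑ l : Fin N, g i j l := by
    refine Finset.sum_congr rfl fun i _ => ?_
    rw [Finset.sum_filter]
    refine Finset.sum_congr rfl fun j _ => ?_
    by_cases hji : j = i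
    · simp [hg, hji]
    · rw [if_pos hji]
      have hset : (Finset.univ.filter (fun l : Fin N => l ≠ i)).erase j
          = Finset.univ.filter (fun l => i ≠ j ∧ j ≠ l ∧ l ≠ i) := by
        ext l
        simp only [Finset.mem_erase, Finset.mem_filter, Finset.mem_univ, true_and]
        constructor
        · rintro ⟨h1, h2⟩
          exact ⟨fun h => hji h.symm, fun h => h1 h.symm, h2⟩
        · rintro ⟨-, h2, h3⟩
          exact ⟨fun h => h2 h.symm, h3⟩
      rw [hset, Finset.sum_filter]
  have hcyc1 : (∑ i : Fin N, ∑ j : Fin N, ∑ l : Fin N, g i j l)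
      = ∑ i : Fin N, ∑ j : Fin N, ∑ l : Fin N, g j l i := cyc3 g
  have hcyc2 : (∑ i : Fin N, ∑ j : Fin N, ∑ l : Fin N, g i j l)
      = ∑ i : Fin N, ∑ j : Fin N, ∑ l : Fin N, g l i j :=
    (cyc3 g).trans (cyc3 (fun i j l => g j l i))
  have hpt : ∀ i j l : Fin N, 0 ≤ g i j l + g j l i + g l i j := by
    intro i j l
    by_cases hcond : i ≠ j ∧ j ≠ l ∧ l ≠ i
    · have h2 : j ≠ l ∧ l ≠ i ∧ i ≠ j := ⟨hcond.2.1, hcond.2.2, hcond.1⟩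
      have h3 : l ≠ i ∧ i ≠ j ∧ j ≠ l := ⟨hcond.2.2, hcond.1, hcond.2.1⟩
      simp only [hg, if_pos hcond, if_pos h2, if_pos h3]
      have := triPts (s + 1) (by linarith) (by linarith) (x i) (x j) (x l)
        (hx i j hcond.1) (hx i l (Ne.symm hcond.2.2)) (hx j l hcond.2.1)
      simp only [hf]
      linarith
    · have h2 : ¬(j ≠ l ∧ l ≠ i ∧ i ≠ j) := fun h => hcond ⟨h.2.2, h.1, h.2.1⟩
      have h3 : ¬(l ≠ i ∧ i ≠ j ∧ j ≠ l) := fun h => hcond ⟨h.2.1, h.2.2, h.1⟩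
      simp [hg, if_neg hcond, if_neg h2, if_neg h3]
  have hC : 0 ≤ ∑ i : Fin N, ∑ j : Fin N, ∑ l : Fin N, g i j l := by
    have h3S : (∑ i : Fin N, ∑ j : Fin N, ∑ l : Fin N, g i j l)
        + (∑ i : Fin N, ∑ j : Fin N, ∑ l : Fin N, g i j l)
        + (∑ i : Fin N, ∑ j : Fin N, ∑ l : Fin N, g i j l)
        = ∑ i : Fin N, ∑ j : Fin N, ∑ l : Fin N, (g i j l + g j l i + g l i j) := by
      nth_rewrite 2 [hcyc1]
      nth_rewrite 2 [hcyc2]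
      simp only [← Finset.sum_add_distrib]
    have hnn : 0 ≤ ∑ i : Fin N, ∑ j : Fin N, ∑ l : Fin N, (g i j l + g j l i + g l i j) :=
      Finset.sum_nonneg fun i _ => Finset.sum_nonneg fun j _ =>
        Finset.sum_nonneg fun l _ => hpt i j l
    linarith
  -- Assemble
  have hmain : (∑ i : Fin N,
      ⟪∑ j ∈ Finset.univ.filter (fun j => j ≠ i), (‖x i - x j‖ ^ (s + 1))⁻¹ • (x i - x j),
        ∑ l ∈ Finset.univ.filter (fun l => l ≠ i), (‖x i - x l‖ ^ (s + 1))⁻¹ • (x i - x l)⟫)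
      = (∑ i : Fin N, ∑ j ∈ Finset.univ.filter (fun j => j ≠ i), w i j)
        + ∑ i : Fin N, ∑ j : Fin N, ∑ l : Fin N, g i j l := by
    rw [← hCg, ← Finset.sum_add_distrib]
    exact Finset.sum_congr rfl fun i _ => (hLHS i).trans (hsplit i)
  have hDval : (∑ i : Fin N, ∑ j ∈ Finset.univ.filter (fun j => j ≠ i), w i j)
      = 2 * ∑ i : Fin N, ∑ j ∈ Finset.univ.filter (fun j => i < j), w i j := by
    calc (∑ i : Fin N, ∑ j ∈ Finset.univ.filter (fun j => j ≠ i), w i j)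
        = (∑ i : Fin N, ∑ j ∈ Finset.univ.filter (fun j => i < j), w i j)
          + ∑ i : Fin N, ∑ j ∈ Finset.univ.filter (fun j => j < i), w i j := by
          rw [← Finset.sum_add_distrib]
          exact Finset.sum_congr rfl fun i _ => hDsplit i
      _ = 2 * ∑ i : Fin N, ∑ j ∈ Finset.univ.filter (fun j => i < j), w i j := by
          rw [hswap]; ring
  rw [ge_iff_le, hmain, hDval]
  have : (2 : ℝ) * (∑ i : Fin N, ∑ j ∈ Finset.univ.filter (fun j => i < j),
      (‖x i - x j‖ ^ (2 * s))⁻¹)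
      = 2 * ∑ i : Fin N, ∑ j ∈ Finset.univ.filter (fun j => i < j), w i j := by
    simp only [hw]
  linarith
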